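/- Let a > 0 and let k : [0, ∞) → ℝ be continuous with k(s) ≤ −a² for all s, and let F be the solution of F'' + kF = 0 with F(0) = 0, F'(0) = 1. Then F(t) ≥ F(r)·e^{a(t−r)} for all 0 < r ≤ t, and consequently for every r > 0 the integral ∫ᵣ^∞ dt/F(t) is finite. -/

import Mathlib

open Set Real Filter Topology MeasureTheory

/-- Exponential growth of `F` and finiteness of `∫ᵣ^∞ dt/F(t)` (used in Lemma 5):
if `k ≤ -a² < 0` and `F'' + kF = 0`, `F(0)=0`, `F'(0)=1`, then `F(t) ≥ F(r)e^{a(t-r)}`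
for `0 < r ≤ t`, and `1/F` is integrable on `[r,∞)` for every `r > 0`. -/
theorem stmt_10 (a : ℝ) (ha : 0 < a) (k F F' F'' : ℝ → ℝ)
    (hk_cont : ContinuousOn k (Set.Ici 0))
    (hk_le : ∀ s ∈ Set.Ici (0 : ℝ), k s ≤ -a ^ 2)
    (hF' : ∀ s ∈ Set.Ici (0 : ℝ), HasDerivWithinAt F (F' s) (Set.Ici 0) s)
    (hF'' : ∀ s ∈ Set.Ici (0 : ℝ), HasDerivWithinAt F' (F'' s) (Set.Ici 0) s)
    (hF''_cont : ContinuousOn F'' (Set.Ici 0))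
    (hODE : ∀ s ∈ Set.Ici (0 : ℝ), F'' s + k s * F s = 0)
    (hF0 : F 0 = 0) (hF'0 : F' 0 = 1) :
    (∀ r t : ℝ, 0 < r → r ≤ t → F r * Real.exp (a * (t - r)) ≤ F t) ∧
      ∀ r : ℝ, 0 < r → IntegrableOn (fun t => 1 / F t) (Set.Ici r) := by
  have hFcont : ContinuousOn F (Set.Ici 0) := fun s hs => (hF' s hs).continuousWithinAt
  have hF'cont : ContinuousOn F' (Set.Ici 0) := fun s hs => (hF'' s hs).continuousWithinAt
  -- derivatives as full derivatives at interior points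
  have hFd : ∀ x : ℝ, 0 < x → HasDerivAt F (F' x) x := fun x hx =>
    (hF' x hx.le).hasDerivAt (Ici_mem_nhds hx)
  have hF'd : ∀ x : ℝ, 0 < x → HasDerivAt F' (F'' x) x := fun x hx =>
    (hF'' x hx.le).hasDerivAt (Ici_mem_nhds hx)
  -- Helper: if F ≥ 0 on [0,c] then F' c - a F c ≥ exp(-(a c)).
  have helper : ∀ c : ℝ, 0 ≤ c → (∀ u ∈ Set.Icc (0:ℝ) c, 0 ≤ F u) →
      Real.exp (-(a * c)) ≤ F' c - a * F c := by
    intro c hc hpos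
    set G : ℝ → ℝ := fun u => Real.exp (a * u) * (F' u - a * F u) with hGdef
    have hGd : ∀ x ∈ Set.Ioo (0:ℝ) c,
        HasDerivAt G (Real.exp (a * x) * (F'' x - a ^ 2 * F x)) x := by
      intro x hx
      have he : HasDerivAt (fun u : ℝ => Real.exp (a * u)) (Real.exp (a * x) * a) x := by
        simpa using ((hasDerivAt_id x).const_mul a).exp
      have h3 : HasDerivAt (fun u => F' u - a * F u) (F'' x - a * F' x) x :=
        (hF'd x hx.1).sub ((hFd x hx.1).const_mul a)
      have := he.fun_mul h3
      refine this.congr_deriv ?_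
      ring
    have hGmono : MonotoneOn G (Set.Icc 0 c) := by
      have hsub : Set.Icc (0:ℝ) c ⊆ Set.Ici 0 := fun u hu => hu.1
      apply monotoneOn_of_hasDerivWithinAt_nonneg (f' := fun x =>
        Real.exp (a * x) * (F'' x - a ^ 2 * F x)) (convex_Icc 0 c)
      · exact ((Real.continuous_exp.comp (continuous_const.mul continuous_id)).continuousOn).mul
          ((hF'cont.mono hsub).sub (continuousOn_const.mul (hFcont.mono hsub)))
      · intro x hx
        rw [interior_Icc] at hx
        exact (hGd x hx).hasDerivWithinAt
      · intro x hx
        rw [interior_Icc] at hx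
        have hxI : x ∈ Set.Ici (0:ℝ) := hx.1.le
        have hF''x : F'' x = -(k x * F x) := by
          have := hODE x hxI
          linarith
        have hFx : 0 ≤ F x := hpos x ⟨hx.1.le, hx.2.le⟩
        have hkx : k x ≤ -a ^ 2 := hk_le x hxI
        have : 0 ≤ F'' x - a ^ 2 * F x := by
          rw [hF''x]
          nlinarith
        exact mul_nonneg (Real.exp_pos _).le this
    rcases eq_or_lt_of_le hc with h | h
    · subst h
      simp [hF0, hF'0]
    · have hG0 : G 0 = 1 := by simp [hGdef, hF0, hF'0]
      have hGc := hGmono (Set.left_mem_Icc.2 hc) (Set.right_mem_Icc.2 hc) hc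
      rw [hG0] at hGc
      calc Real.exp (-(a * c)) = Real.exp (-(a * c)) * 1 := (mul_one _).symm
        _ ≤ Real.exp (-(a * c)) * (Real.exp (a * c) * (F' c - a * F c)) := by
            exact mul_le_mul_of_nonneg_left hGc (Real.exp_pos _).le
        _ = F' c - a * F c := by
            rw [← mul_assoc, ← Real.exp_add, neg_add_cancel, Real.exp_zero, one_mul]
  -- Step 1: F ≥ 0 on [0, ∞).
  have hFnn : ∀ s ∈ Set.Ici (0:ℝ), 0 ≤ F s := by
    by_contra hcon
    push_neg at hcon
    obtain ⟨t, ht0, htF⟩ := hcon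
    set S : Set ℝ := {u | 0 ≤ u ∧ F u < 0} with hSdef
    have hSne : S.Nonempty := ⟨t, ht0, htF⟩
    have hSbdd : BddBelow S := ⟨0, fun u hu => hu.1⟩
    set c := sInf S with hcdef
    have hc0 : 0 ≤ c := le_csInf hSne fun u hu => hu.1
    have hlt : ∀ u, 0 ≤ u → u < c → 0 ≤ F u := by
      intro u hu0 huc
      by_contra h
      push_neg at h
      exact absurd (csInf_le hSbdd ⟨hu0, h⟩) (not_le.2 huc)
    have hFccont : ContinuousWithinAt F (Set.Ici 0) c := (hF' c hc0).continuousWithinAt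
    -- F c ≤ 0 by approach from S
    have hcl : c ∈ closure S := csInf_mem_closure hSne hSbdd
    haveI hne : (𝓝[S] c).NeBot := mem_closure_iff_nhdsWithin_neBot.1 hcl
    have htend : Tendsto F (𝓝[S] c) (𝓝 (F c)) := hFccont.mono fun u hu => hu.1
    have hFcle : F c ≤ 0 :=
      le_of_tendsto htend (eventually_mem_nhdsWithin.mono fun u hu => hu.2.le)
    have hFc0 : F c = 0 := by
      rcases eq_or_lt_of_le hc0 with h | h
      · rw [← h, hF0]
      · -- 0 < c : approach from the left where F ≥ 0
        have hclosL : c ∈ closure (Set.Ico 0 c) := by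
          rw [closure_Ico h.ne]
          exact Set.right_mem_Icc.2 h.le
        haveI hneL : (𝓝[Set.Ico 0 c] c).NeBot := mem_closure_iff_nhdsWithin_neBot.1 hclosL
        have htendL : Tendsto F (𝓝[Set.Ico 0 c] c) (𝓝 (F c)) :=
          hFccont.mono fun u hu => hu.1
        have hge : 0 ≤ F c :=
          ge_of_tendsto htendL (eventually_mem_nhdsWithin.mono fun u hu => hlt u hu.1 hu.2)
        exact le_antisymm hFcle hge
    have hpos : ∀ u ∈ Set.Icc (0:ℝ) c, 0 ≤ F u := by
      intro u hu
      rcases eq_or_lt_of_le hu.2 with h | h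
      · rw [h, hFc0]
      · exact hlt u hu.1 h
    have hW := helper c hc0 hpos
    have hF'c : 0 < F' c := by
      have h1 : a * F c = 0 := by rw [hFc0, mul_zero]
      have := Real.exp_pos (-(a * c))
      linarith
    -- slope argument to the right of c
    have hd : HasDerivWithinAt F (F' c) (Set.Ioi c) c :=
      (hF' c hc0).mono fun u hu => le_trans hc0 (le_of_lt hu)
    have hslope : Tendsto (slope F c) (𝓝[>] c) (𝓝 (F' c)) :=
      (hasDerivWithinAt_iff_tendsto_slope' (notMem_Ioi.2 le_rfl)).1 hd
    have hmem : {u : ℝ | 0 < slope F c u} ∈ 𝓝[>] c := hslope (lt_mem_nhds hF'c)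
    obtain ⟨d, hcd, hsub⟩ := mem_nhdsGT_iff_exists_Ioo_subset.1 hmem
    obtain ⟨u, huS, hud⟩ := exists_lt_of_csInf_lt hSne (show sInf S < d from hcdef ▸ hcd)
    have hcu : c < u := by
      have h1 : c ≤ u := csInf_le hSbdd huS
      rcases eq_or_lt_of_le h1 with h | h
      · exfalso; rw [← h] at huS; exact absurd hFc0 (ne_of_lt huS.2)
      · exact h
    have hsl : 0 < slope F c u := hsub ⟨hcu, hud⟩
    rw [slope_def_field, hFc0, sub_zero] at hsl
    have : F u / (u - c) < 0 := div_neg_of_neg_of_pos huS.2 (sub_pos.2 hcu)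
    linarith
  -- Step 2: the gap F' - aF ≥ exp(-(a s)) everywhere
  have hW : ∀ s : ℝ, 0 ≤ s → Real.exp (-(a * s)) ≤ F' s - a * F s := fun s hs =>
    helper s hs fun u hu => hFnn u hu.1
  -- Step 3: t ↦ F t * exp(-(a t)) is monotone on [0, ∞)
  have hHmono : MonotoneOn (fun t => F t * Real.exp (-(a * t))) (Set.Ici 0) := by
    apply monotoneOn_of_hasDerivWithinAt_nonneg (f' := fun x =>
      Real.exp (-(a * x)) * (F' x - a * F x)) (convex_Ici 0)
    · exact hFcont.mul
        ((Real.continuous_exp.comp (continuous_const.mul continuous_id).neg).continuousOn)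
    · intro x hx
      rw [interior_Ici] at hx
      have he : HasDerivAt (fun u : ℝ => Real.exp (-(a * u))) (Real.exp (-(a * x)) * (-a)) x := by
        simpa using (((hasDerivAt_id x).const_mul a).neg).exp
      have := (hFd x hx).mul he
      have heq : F' x * Real.exp (-(a * x)) + F x * (Real.exp (-(a * x)) * (-a)) =
          Real.exp (-(a * x)) * (F' x - a * F x) := by ring
      rw [heq] at this
      exact this.hasDerivWithinAt
    · intro x hx
      rw [interior_Ici] at hx
      have h1 := hW x hx.le
      have h2 := Real.exp_pos (-(a * x))
      exact mul_nonneg h2.le (by linarith)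
  -- main growth inequality
  have hmain : ∀ r t : ℝ, 0 < r → r ≤ t → F r * Real.exp (a * (t - r)) ≤ F t := by
    intro r t hr hrt
    have h := hHmono (Set.mem_Ici.2 hr.le) (Set.mem_Ici.2 (hr.le.trans hrt)) hrt
    have h2 := mul_le_mul_of_nonneg_right h (Real.exp_pos (a * t)).le
    calc F r * Real.exp (a * (t - r))
        = F r * Real.exp (-(a * r)) * Real.exp (a * t) := by
          rw [mul_assoc, ← Real.exp_add]; ring_nf
      _ ≤ F t * Real.exp (-(a * t)) * Real.exp (a * t) := h2
      _ = F t := by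
          rw [mul_assoc, ← Real.exp_add, neg_add_cancel, Real.exp_zero, mul_one]
  -- F is strictly positive on (0, ∞)
  have hFpos : ∀ r : ℝ, 0 < r → 0 < F r := by
    have hstrict : StrictMonoOn F (Set.Ici 0) := by
      apply strictMonoOn_of_hasDerivWithinAt_pos (f' := F') (convex_Ici 0) hFcont
      · intro x hx
        rw [interior_Ici] at hx
        exact (hFd x hx).hasDerivWithinAt
      · intro x hx
        rw [interior_Ici] at hx
        have h1 := hW x hx.le
        have h2 := Real.exp_pos (-(a * x))
        have h3 : 0 ≤ F x := hFnn x (Set.mem_Ici.2 hx.le)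
        nlinarith
    intro r hr
    have := hstrict (Set.self_mem_Ici) (Set.mem_Ici.2 hr.le) hr
    rwa [hF0] at this
  refine ⟨hmain, ?_⟩
  intro r hr
  have hFr : 0 < F r := hFpos r hr
  -- dominating function
  have hg : IntegrableOn (fun t => Real.exp (a * r) / F r * Real.exp (-a * t))
      (Set.Ici r) := by
    rw [integrableOn_Ici_iff_integrableOn_Ioi]
    exact (exp_neg_integrableOn_Ioi r ha).const_mul _
  apply MeasureTheory.Integrable.mono' hg
  · -- measurability
    apply ContinuousOn.aestronglyMeasurable _ measurableSet_Ici
    apply ContinuousOn.div continuousOn_const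
    · exact hFcont.mono fun u hu => le_trans hr.le hu
    · intro u hu
      exact (hFpos u (lt_of_lt_of_le hr hu)).ne'
  · rw [ae_restrict_iff' measurableSet_Ici]
    filter_upwards with t
    intro ht
    have htr : r ≤ t := ht
    have hFt : 0 < F t := hFpos t (lt_of_lt_of_le hr htr)
    have hkey := hmain r t hr htr
    have hden : 0 < F r * Real.exp (a * (t - r)) := by positivity
    rw [Real.norm_eq_abs, abs_of_pos (by positivity : (0:ℝ) < 1 / F t)]
    have h1 : 1 / F t ≤ 1 / (F r * Real.exp (a * (t - r))) :=
      one_div_le_one_div_of_le hden hkey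
    have h2 : 1 / (F r * Real.exp (a * (t - r))) =
        Real.exp (a * r) / F r * Real.exp (-a * t) := by
      rw [one_div, mul_inv, ← Real.exp_neg, div_mul_eq_mul_div, mul_comm]
      rw [← Real.exp_add]
      congr 1
      · ring
    linarith [h1, h2 ▸ h1]
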